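/- Let p ∈ (1,2), let (X, 𝒜, μ) be a measure space and let f, g : X → [0,∞) be measurable with ∫ f^p dμ < ∞ and ∫ g^p dμ < ∞. Suppose one of the following holds: (i) f = g μ-a.e. on the set {fg > 0}; (ii) there is λ ≥ 1 with g = λ f μ-a.e. on {f > 0}; (iii) there is λ ≥ 1 with f = λ g μ-a.e. on {g > 0}. Then, with C := min{∫ f^p dμ, ∫ g^p dμ, ∫ (fg)^{p/2} dμ} / ∫ (fg)^{p/2} dμ if ∫ (fg)^{p/2} dμ > 0 and C := 1 otherwise, equality holds: ∫ (f+g)^p dμ = ∫ f^p dμ + ∫ g^p dμ + ( (C^{−1/p} + C^{1/p})^p − C^{−1} − C ) · ∫ (fg)^{p/2} dμ. -/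

import Mathlib

open MeasureTheory Real Set
open scoped ENNReal

private lemma one_add_rpow_le' {l p : ℝ} (hl : 0 ≤ l) (hp : 1 ≤ p) :
    1 + l ^ p ≤ (1 + l) ^ p := by
  have h := NNReal.add_rpow_le_rpow_add 1 (Real.toNNReal l) hp
  have h2 := NNReal.coe_le_coe.2 h
  push_cast [Real.coe_toNNReal l hl] at h2
  simpa using h2

private lemma scalar_id' {l p : ℝ} (hl : 1 ≤ l) (hp : 1 < p) :
    (1 + ENNReal.ofReal l) ^ p =
      1 + ENNReal.ofReal l ^ p +
        ENNReal.ofReal (((1 + l) ^ p - 1 - l ^ p) / l ^ (p / 2)) *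
          ENNReal.ofReal l ^ (p / 2) := by
  have hl0 : (0:ℝ) < l := lt_of_lt_of_le one_pos hl
  have hc : 0 ≤ ((1 + l) ^ p - 1 - l ^ p) / l ^ (p / 2) := by
    apply div_nonneg _ (Real.rpow_nonneg hl0.le _)
    have := one_add_rpow_le' hl0.le hp.le
    linarith
  have h1l : (1:ℝ≥0∞) + ENNReal.ofReal l = ENNReal.ofReal (1 + l) := by
    rw [ENNReal.ofReal_add zero_le_one hl0.le, ENNReal.ofReal_one]
  rw [h1l, ENNReal.ofReal_rpow_of_pos (by linarith), ENNReal.ofReal_rpow_of_pos hl0,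
    ENNReal.ofReal_rpow_of_pos hl0, ← ENNReal.ofReal_mul hc,
    show (1:ℝ≥0∞) = ENNReal.ofReal 1 from ENNReal.ofReal_one.symm,
    ← ENNReal.ofReal_add zero_le_one (Real.rpow_nonneg hl0.le _),
    ← ENNReal.ofReal_add (by positivity) (mul_nonneg hc (Real.rpow_nonneg hl0.le _))]
  congr 1
  have hlp : l ^ (p/2) ≠ 0 := (Real.rpow_pos_of_pos hl0 _).ne'
  field_simp
  ring

private lemma ptwise2' {l p : ℝ} (hl : 1 ≤ l) (hp : 1 < p) (a : ℝ≥0∞) :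
    (a + ENNReal.ofReal l * a) ^ p =
      a ^ p + (ENNReal.ofReal l * a) ^ p +
        ENNReal.ofReal (((1 + l) ^ p - 1 - l ^ p) / l ^ (p / 2)) *
          (a * (ENNReal.ofReal l * a)) ^ (p / 2) := by
  have hp0 : (0:ℝ) ≤ p := by linarith
  have hp2 : (0:ℝ) ≤ p/2 := by linarith
  have h1 : a + ENNReal.ofReal l * a = (1 + ENNReal.ofReal l) * a := by
    rw [add_mul, one_mul]
  have h2 : a * (ENNReal.ofReal l * a) = ENNReal.ofReal l * (a * a) := by ring
  rw [h1, h2, ENNReal.mul_rpow_of_nonneg _ _ hp0, ENNReal.mul_rpow_of_nonneg _ _ hp0,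
    ENNReal.mul_rpow_of_nonneg _ _ hp2, ENNReal.mul_rpow_of_nonneg _ _ hp2,
    ← ENNReal.rpow_add_of_nonneg _ _ hp2 hp2, show p/2 + p/2 = p by ring,
    scalar_id' hl hp]
  ring

private lemma exists_k2 {X : Type*} [MeasurableSpace X] (μ : Measure X) {p : ℝ}
    (hp1 : 1 < p) (hp2 : p < 2)
    {f g : X → ℝ≥0∞} (hf : Measurable f) (hg : Measurable g)
    (hfp : ∫⁻ x, f x ^ p ∂μ ≠ ∞) (hgp : ∫⁻ x, g x ^ p ∂μ ≠ ∞)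
    {l : ℝ} (hl : 1 ≤ l)
    (hfg : ∀ᵐ x ∂μ, 0 < f x → g x = ENNReal.ofReal l * f x)
    {C : ℝ}
    (hC : C = if 0 < ∫⁻ x, (f x * g x) ^ (p / 2) ∂μ then
        min (min (∫⁻ x, f x ^ p ∂μ).toReal (∫⁻ x, g x ^ p ∂μ).toReal)
            (∫⁻ x, (f x * g x) ^ (p / 2) ∂μ).toReal /
          (∫⁻ x, (f x * g x) ^ (p / 2) ∂μ).toReal
      else 1) :
    ∃ k : ℝ≥0∞,
      (∀ᵐ x ∂μ, (f x + g x) ^ p = f x ^ p + g x ^ p + k * (f x * g x) ^ (p / 2)) ∧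
      (∫⁻ x, (f x * g x) ^ (p / 2) ∂μ ≠ 0 →
        ENNReal.ofReal ((C ^ (-(1 / p)) + C ^ (1 / p)) ^ p - C⁻¹ - C) = k) := by
  have hl0 : (0:ℝ) < l := lt_of_lt_of_le one_pos hl
  have hp0 : (0:ℝ) < p := by linarith
  have hp2' : (0:ℝ) < p/2 := by linarith
  have hz1 : (0:ℝ≥0∞) ^ p = 0 := ENNReal.zero_rpow_of_pos hp0
  have hz2 : (0:ℝ≥0∞) ^ (p/2) = 0 := ENNReal.zero_rpow_of_pos hp2'
  set L := ENNReal.ofReal l with hL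
  refine ⟨ENNReal.ofReal (((1 + l) ^ p - 1 - l ^ p) / l ^ (p / 2)), ?_, ?_⟩
  · filter_upwards [hfg] with x hx
    rcases eq_zero_or_pos (f x) with h0 | hpos
    · simp [h0, hz1, hz2]
    · rw [hx hpos]
      exact ptwise2' hl hp1 (f x)
  · intro hI
    -- the pointwise identity (f*g)^(p/2) = L^(p/2) * f^p a.e.
    have hptI : ∀ᵐ x ∂μ, (f x * g x) ^ (p/2) = L ^ (p/2) * f x ^ p := by
      filter_upwards [hfg] with x hx
      rcases eq_zero_or_pos (f x) with h0 | hpos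
      · simp [h0, hz1, hz2]
      · rw [hx hpos, show f x * (L * f x) = L * (f x * f x) by ring,
          ENNReal.mul_rpow_of_nonneg _ _ hp2'.le, ENNReal.mul_rpow_of_nonneg _ _ hp2'.le,
          ← ENNReal.rpow_add_of_nonneg _ _ hp2'.le hp2'.le, show p/2 + p/2 = p by ring]
    have hIe : ∫⁻ x, (f x * g x) ^ (p/2) ∂μ = L ^ (p/2) * ∫⁻ x, f x ^ p ∂μ := by
      rw [lintegral_congr_ae hptI, lintegral_const_mul _ (hf.pow_const p)]
    have hLr : L ^ (p/2) = ENNReal.ofReal (l ^ (p/2)) := ENNReal.ofReal_rpow_of_pos hl0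
    have hLfin : L ^ (p/2) ≠ ∞ := by rw [hLr]; exact ENNReal.ofReal_ne_top
    have hA0 : ∫⁻ x, f x ^ p ∂μ ≠ 0 := by
      intro h; apply hI; rw [hIe, h, mul_zero]
    have hIfin : ∫⁻ x, (f x * g x) ^ (p/2) ∂μ ≠ ∞ := by
      rw [hIe]; exact ENNReal.mul_ne_top hLfin hfp
    -- A ≤ G
    have hAG : ∫⁻ x, f x ^ p ∂μ ≤ ∫⁻ x, g x ^ p ∂μ := by
      apply lintegral_mono_ae
      filter_upwards [hfg] with x hx
      rcases eq_zero_or_pos (f x) with h0 | hpos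
      · simp [h0, hz1]
      · rw [hx hpos]
        exact ENNReal.rpow_le_rpow (le_mul_of_one_le_left zero_le
          (ENNReal.one_le_ofReal.2 hl)) hp0.le
    have h1lp : (1:ℝ) ≤ l ^ (p/2) := Real.one_le_rpow hl hp2'.le
    have hAI : ∫⁻ x, f x ^ p ∂μ ≤ ∫⁻ x, (f x * g x) ^ (p/2) ∂μ := by
      rw [hIe]
      exact le_mul_of_one_le_left zero_le
        (by rw [hLr]; exact ENNReal.one_le_ofReal.2 h1lp)
    have hA' : 0 < (∫⁻ x, f x ^ p ∂μ).toReal := ENNReal.toReal_pos hA0 hfp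
    have hI' : (∫⁻ x, (f x * g x) ^ (p/2) ∂μ).toReal =
        l ^ (p/2) * (∫⁻ x, f x ^ p ∂μ).toReal := by
      rw [hIe, ENNReal.toReal_mul, hLr, ENNReal.toReal_ofReal (Real.rpow_nonneg hl0.le _)]
    have hCval : C = l ^ (-(p/2)) := by
      rw [hC, if_pos (pos_iff_ne_zero.2 hI), min_eq_left, min_eq_left, hI',
        Real.rpow_neg hl0.le]
      · field_simp
      · exact ENNReal.toReal_mono hgp hAG
      · rw [hI']
        exact le_trans (min_le_left _ _) (le_mul_of_one_le_left hA'.le h1lp)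
    -- final real identity
    congr 1
    rw [hCval]
    have hu : (0:ℝ) < l ^ (p/2) := Real.rpow_pos_of_pos hl0 _
    have hp0' : p ≠ 0 := hp0.ne'
    have e1 : (l ^ (-(p/2))) ^ (-(1/p)) = l ^ (1/2 : ℝ) := by
      rw [← Real.rpow_mul hl0.le, show -(p/2) * -(1/p) = 1/2 by field_simp]
    have e2 : (l ^ (-(p/2))) ^ (1/p) = l ^ (-(1/2) : ℝ) := by
      rw [← Real.rpow_mul hl0.le, show -(p/2) * (1/p) = -(1/2) by field_simp]
    have e3 : (l ^ (-(p/2)))⁻¹ = l ^ (p/2) := by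
      rw [Real.rpow_neg hl0.le, inv_inv]
    have e4 : l ^ (-(p/2)) = (l ^ (p/2))⁻¹ := Real.rpow_neg hl0.le _
    have hlp2 : l ^ p = l ^ (p/2) * l ^ (p/2) := by
      rw [← Real.rpow_add hl0]; ring_nf
    have hmul : l * l ^ (-(1/2):ℝ) = l ^ (1/2:ℝ) := by
      nth_rewrite 1 [← Real.rpow_one l]
      rw [← Real.rpow_add hl0]; norm_num
    have hsum : l ^ (1/2:ℝ) + l ^ (-(1/2):ℝ) = (1 + l) * l ^ (-(1/2):ℝ) := by
      rw [add_mul, one_mul, hmul, add_comm]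
    have hpow : (l ^ (-(1/2):ℝ)) ^ p = (l ^ (p/2))⁻¹ := by
      rw [← Real.rpow_mul hl0.le, show -(1/2) * p = -(p/2) by ring, Real.rpow_neg hl0.le]
    have hsump : (l ^ (1/2:ℝ) + l ^ (-(1/2):ℝ)) ^ p = (1 + l) ^ p * (l ^ (p/2))⁻¹ := by
      rw [hsum, Real.mul_rpow (by positivity) (Real.rpow_nonneg hl0.le _), hpow]
    rw [e1, e2, e3, e4, hsump, hlp2]
    field_simp
    ring

private lemma exists_k1 {X : Type*} [MeasurableSpace X] (μ : Measure X) {p : ℝ}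
    (hp1 : 1 < p) (hp2 : p < 2)
    {f g : X → ℝ≥0∞} (hf : Measurable f) (hg : Measurable g)
    (hfp : ∫⁻ x, f x ^ p ∂μ ≠ ∞) (hgp : ∫⁻ x, g x ^ p ∂μ ≠ ∞)
    (hfg : ∀ᵐ x ∂μ, 0 < f x * g x → f x = g x)
    {C : ℝ}
    (hC : C = if 0 < ∫⁻ x, (f x * g x) ^ (p / 2) ∂μ then
        min (min (∫⁻ x, f x ^ p ∂μ).toReal (∫⁻ x, g x ^ p ∂μ).toReal)
            (∫⁻ x, (f x * g x) ^ (p / 2) ∂μ).toReal /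
          (∫⁻ x, (f x * g x) ^ (p / 2) ∂μ).toReal
      else 1) :
    ∃ k : ℝ≥0∞,
      (∀ᵐ x ∂μ, (f x + g x) ^ p = f x ^ p + g x ^ p + k * (f x * g x) ^ (p / 2)) ∧
      (∫⁻ x, (f x * g x) ^ (p / 2) ∂μ ≠ 0 →
        ENNReal.ofReal ((C ^ (-(1 / p)) + C ^ (1 / p)) ^ p - C⁻¹ - C) = k) := by
  have hp0 : (0:ℝ) < p := by linarith
  have hp2' : (0:ℝ) < p/2 := by linarith
  have hz1 : (0:ℝ≥0∞) ^ p = 0 := ENNReal.zero_rpow_of_pos hp0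
  have hz2 : (0:ℝ≥0∞) ^ (p/2) = 0 := ENNReal.zero_rpow_of_pos hp2'
  have hsq : ∀ a : ℝ≥0∞, (a * a) ^ (p/2) = a ^ p := by
    intro a
    rw [ENNReal.mul_rpow_of_nonneg _ _ hp2'.le,
      ← ENNReal.rpow_add_of_nonneg _ _ hp2'.le hp2'.le, show p/2 + p/2 = p by ring]
  refine ⟨ENNReal.ofReal ((2:ℝ) ^ p - 2), ?_, ?_⟩
  · filter_upwards [hfg] with x hx
    rcases eq_zero_or_pos (f x * g x) with h0 | hpos
    · rcases mul_eq_zero.1 h0 with h | h <;> simp [h, hz1, hz2]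
    · have heq := hx hpos
      rw [← heq, hsq]
      have h := ptwise2' (le_refl (1:ℝ)) hp1 (f x)
      simp only [ENNReal.ofReal_one, one_mul, Real.one_rpow, div_one] at h
      rw [hsq] at h
      rw [show ((1:ℝ) + 1) = 2 by norm_num] at h
      rw [show (2:ℝ) ^ p - 2 = 2 ^ p - 1 - 1 by ring]
      exact h
  · intro hI
    have hIA : ∫⁻ x, (f x * g x) ^ (p/2) ∂μ ≤ ∫⁻ x, f x ^ p ∂μ := by
      apply lintegral_mono_ae
      filter_upwards [hfg] with x hx
      rcases eq_zero_or_pos (f x * g x) with h0 | hpos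
      · rw [h0, hz2]; exact zero_le
      · rw [← hx hpos, hsq]
    have hIG : ∫⁻ x, (f x * g x) ^ (p/2) ∂μ ≤ ∫⁻ x, g x ^ p ∂μ := by
      apply lintegral_mono_ae
      filter_upwards [hfg] with x hx
      rcases eq_zero_or_pos (f x * g x) with h0 | hpos
      · rw [h0, hz2]; exact zero_le
      · rw [hx hpos, hsq]
    have hIfin : ∫⁻ x, (f x * g x) ^ (p/2) ∂μ ≠ ∞ := fun h => hfp (top_le_iff.1 (h ▸ hIA))
    have hI' : 0 < (∫⁻ x, (f x * g x) ^ (p/2) ∂μ).toReal := ENNReal.toReal_pos hI hIfin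
    have hCval : C = 1 := by
      rw [hC, if_pos (pos_iff_ne_zero.2 hI), min_eq_right, div_self hI'.ne']
      exact le_min (ENNReal.toReal_mono hfp hIA) (ENNReal.toReal_mono hgp hIG)
    rw [hCval]
    congr 1
    norm_num
    ring

theorem statement7
    {X : Type*} [MeasurableSpace X] (μ : Measure X) (p : ℝ)
    (hp : p ∈ Set.Ioo (1 : ℝ) 2)
    (f g : X → ℝ≥0∞) (hf : Measurable f) (hg : Measurable g)
    (hffin : ∀ x, f x ≠ ∞) (hgfin : ∀ x, g x ≠ ∞)
    (hfp : ∫⁻ x, f x ^ p ∂μ ≠ ∞) (hgp : ∫⁻ x, g x ^ p ∂μ ≠ ∞)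
    (hcase :
      (∀ᵐ x ∂μ, 0 < f x * g x → f x = g x) ∨
      (∃ l : ℝ, 1 ≤ l ∧ ∀ᵐ x ∂μ, 0 < f x → g x = ENNReal.ofReal l * f x) ∨
      (∃ l : ℝ, 1 ≤ l ∧ ∀ᵐ x ∂μ, 0 < g x → f x = ENNReal.ofReal l * g x))
    (C : ℝ)
    (hC : C = if 0 < ∫⁻ x, (f x * g x) ^ (p / 2) ∂μ then
        min (min (∫⁻ x, f x ^ p ∂μ).toReal (∫⁻ x, g x ^ p ∂μ).toReal)
            (∫⁻ x, (f x * g x) ^ (p / 2) ∂μ).toReal /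
          (∫⁻ x, (f x * g x) ^ (p / 2) ∂μ).toReal
      else 1) :
    ∫⁻ x, (f x + g x) ^ p ∂μ =
      ∫⁻ x, f x ^ p ∂μ + ∫⁻ x, g x ^ p ∂μ +
        ENNReal.ofReal ((C ^ (-(1 / p)) + C ^ (1 / p)) ^ p - C⁻¹ - C) *
          ∫⁻ x, (f x * g x) ^ (p / 2) ∂μ := by
  obtain ⟨hp1, hp2⟩ := hp
  have hgfcomm : ∫⁻ x, (g x * f x) ^ (p/2) ∂μ = ∫⁻ x, (f x * g x) ^ (p/2) ∂μ :=
    lintegral_congr fun x => by rw [mul_comm]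
  have main : ∃ k : ℝ≥0∞,
      (∀ᵐ x ∂μ, (f x + g x) ^ p = f x ^ p + g x ^ p + k * (f x * g x) ^ (p / 2)) ∧
      (∫⁻ x, (f x * g x) ^ (p / 2) ∂μ ≠ 0 →
        ENNReal.ofReal ((C ^ (-(1 / p)) + C ^ (1 / p)) ^ p - C⁻¹ - C) = k) := by
    rcases hcase with h | ⟨l, hl, h⟩ | ⟨l, hl, h⟩
    · exact exists_k1 μ hp1 hp2 hf hg hfp hgp h hC
    · exact exists_k2 μ hp1 hp2 hf hg hfp hgp hl h hC
    · have hC' : C = if 0 < ∫⁻ x, (g x * f x) ^ (p / 2) ∂μ then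
          min (min (∫⁻ x, g x ^ p ∂μ).toReal (∫⁻ x, f x ^ p ∂μ).toReal)
              (∫⁻ x, (g x * f x) ^ (p / 2) ∂μ).toReal /
            (∫⁻ x, (g x * f x) ^ (p / 2) ∂μ).toReal
        else 1 := by
        rw [hC, hgfcomm, min_comm (∫⁻ x, f x ^ p ∂μ).toReal]
      obtain ⟨k, h1, h2⟩ := exists_k2 μ hp1 hp2 hg hf hgp hfp hl h hC'
      refine ⟨k, ?_, ?_⟩
      · filter_upwards [h1] with x hx
        rw [add_comm (f x) (g x), mul_comm (f x) (g x), hx]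
        ring
      · intro hI
        exact h2 (by rwa [hgfcomm])
  obtain ⟨k, hk1, hk2⟩ := main
  rw [lintegral_congr_ae hk1,
    lintegral_add_left (f := fun x => f x ^ p + g x ^ p) ((hf.pow_const p).add (hg.pow_const p)),
    lintegral_add_left (hf.pow_const p),
    lintegral_const_mul k (f := fun x => (f x * g x) ^ (p / 2)) ((hf.mul hg).pow_const _)]
  by_cases hI : ∫⁻ x, (f x * g x) ^ (p / 2) ∂μ = 0
  · simp [hI]
  · rw [hk2 hI]
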